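/- Let g be a positive definite Hermitian n×n matrix and g₀ a positive definite Hermitian n×n matrix. Then tr(g₀⁻¹ g) ≤ (1/(n−1)!) · (tr(g⁻¹ g₀))^{n−1} · (det g / det g₀). -/

import Mathlib

open scoped ComplexOrder

open Finset in
private lemma aux_comb (m : ℕ) (x : Fin (m + 1) → ℝ) (hx : ∀ i, 0 ≤ x i) :
    (m.factorial : ℝ) * ∑ i : Fin (m + 1), ∏ k : Fin m, x (i.succAbove k)
      ≤ (∑ i, x i) ^ m := by
  rw [Fintype.sum_pow]
  have hinj : Function.Injective
      (fun p : Fin (m + 1) × Equiv.Perm (Fin m) => p.1.succAbove ∘ p.2) := by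
    rintro ⟨i, π⟩ ⟨i', π'⟩ h
    have h' : i.succAbove ∘ π = i'.succAbove ∘ π' := h
    simp only [Prod.mk.injEq]
    have hrange : Set.range (i.succAbove ∘ π) = Set.range (i'.succAbove ∘ π') := by rw [h']
    rw [π.surjective.range_comp, π'.surjective.range_comp, Fin.range_succAbove,
      Fin.range_succAbove, compl_inj_iff, Set.singleton_eq_singleton_iff] at hrange
    subst hrange
    refine ⟨rfl, Equiv.ext fun k => ?_⟩
    have := congrFun h' k
    exact Fin.succAbove_right_injective this
  calc (m.factorial : ℝ) * ∑ i : Fin (m + 1), ∏ k : Fin m, x (i.succAbove k)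
      = ∑ p : Fin (m + 1) × Equiv.Perm (Fin m), ∏ k, x ((p.1.succAbove ∘ p.2) k) := by
        rw [Fintype.sum_prod_type]
        rw [Finset.mul_sum]
        congr 1
        ext i
        have : ∀ π : Equiv.Perm (Fin m), ∏ k, x ((i.succAbove ∘ π) k)
            = ∏ k : Fin m, x (i.succAbove k) := fun π =>
          Equiv.prod_comp π (fun k => x (i.succAbove k))
        simp only [this, Finset.sum_const, nsmul_eq_mul, Fintype.card_perm, Finset.card_univ,
          Fintype.card_fin]
    _ = ∑ p ∈ Finset.univ.image
          (fun p : Fin (m + 1) × Equiv.Perm (Fin m) => p.1.succAbove ∘ p.2),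
          ∏ k, x (p k) := by
        rw [Finset.sum_image (fun a _ b _ hab => hinj hab)]
    _ ≤ ∑ p : Fin m → Fin (m + 1), ∏ k, x (p k) := by
        apply Finset.sum_le_sum_of_subset_of_nonneg (Finset.subset_univ _)
        intro p _ _
        exact Finset.prod_nonneg fun k _ => hx _

private lemma aux_scalar (m : ℕ) (lam : Fin (m + 1) → ℝ) (hlam : ∀ i, 0 < lam i) :
    ∑ i, lam i ≤ (1 / (m.factorial : ℝ)) * (∑ i, (lam i)⁻¹) ^ m * ∏ i, lam i := by
  have hprod : 0 < ∏ i, lam i := Finset.prod_pos fun i _ => hlam i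
  have hfac : (0 : ℝ) < m.factorial := by positivity
  have hlam_eq : ∀ i : Fin (m + 1),
      lam i = (∏ j, lam j) * ∏ k : Fin m, (lam (i.succAbove k))⁻¹ := by
    intro i
    rw [Finset.prod_inv_distrib, Fin.prod_univ_succAbove lam i, mul_assoc,
      mul_inv_cancel₀ (Finset.prod_pos fun k _ => hlam _).ne', mul_one]
  calc ∑ i, lam i
      = (∏ j, lam j) * ∑ i : Fin (m + 1), ∏ k : Fin m, (lam (i.succAbove k))⁻¹ := by
        rw [Finset.mul_sum]; exact Finset.sum_congr rfl fun i _ => hlam_eq i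
    _ ≤ (∏ j, lam j) * ((1 / (m.factorial : ℝ)) * (∑ i, (lam i)⁻¹) ^ m) := by
        apply mul_le_mul_of_nonneg_left _ hprod.le
        rw [div_mul_eq_mul_div, one_mul, le_div_iff₀ hfac, mul_comm]
        exact aux_comb m (fun i => (lam i)⁻¹) fun i => (inv_pos.2 (hlam i)).le
    _ = (1 / (m.factorial : ℝ)) * (∑ i, (lam i)⁻¹) ^ m * ∏ i, lam i := by ring


private lemma aux_trace {N : ℕ} {A : Matrix (Fin N) (Fin N) ℂ} (hA : A.IsHermitian) :
    A.trace = ∑ i, (hA.eigenvalues i : ℂ) := by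
  conv_lhs => rw [hA.spectral_theorem]
  rw [Unitary.conjStarAlgAut_apply, Matrix.trace_mul_cycle,
    Matrix.mem_unitaryGroup_iff'.mp hA.eigenvectorUnitary.2, Matrix.one_mul,
    Matrix.trace_diagonal]
  rfl

private lemma aux_unit_inv {N : ℕ} (U D D' : Matrix (Fin N) (Fin N) ℂ)
    (h1 : U * star U = 1) (h2 : star U * U = 1) (hDD : D * D' = 1) :
    (U * D * star U)⁻¹ = U * D' * star U := by
  apply Matrix.inv_eq_right_inv
  calc U * D * star U * (U * D' * star U)
      = U * D * (star U * U) * D' * star U := by simp only [Matrix.mul_assoc]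
    _ = 1 := by
        rw [h2, Matrix.mul_one, Matrix.mul_assoc U D D', hDD, Matrix.mul_one, h1]

private lemma aux_inv_eq {N : ℕ} {A : Matrix (Fin N) (Fin N) ℂ} (hA : A.IsHermitian)
    (hev : ∀ i, hA.eigenvalues i ≠ 0) :
    A⁻¹ = (hA.eigenvectorUnitary : Matrix (Fin N) (Fin N) ℂ)
      * Matrix.diagonal (fun i => ((hA.eigenvalues i : ℂ))⁻¹)
      * star (hA.eigenvectorUnitary : Matrix (Fin N) (Fin N) ℂ) := by
  have h1 : (hA.eigenvectorUnitary : Matrix (Fin N) (Fin N) ℂ)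
      * star (hA.eigenvectorUnitary : Matrix (Fin N) (Fin N) ℂ) = 1 :=
    Matrix.mem_unitaryGroup_iff.mp hA.eigenvectorUnitary.2
  have h2 : star (hA.eigenvectorUnitary : Matrix (Fin N) (Fin N) ℂ)
      * (hA.eigenvectorUnitary : Matrix (Fin N) (Fin N) ℂ) = 1 :=
    Matrix.mem_unitaryGroup_iff'.mp hA.eigenvectorUnitary.2
  have hDD : Matrix.diagonal (RCLike.ofReal ∘ hA.eigenvalues)
      * Matrix.diagonal (fun i => ((hA.eigenvalues i : ℂ))⁻¹) = 1 := by
    rw [Matrix.diagonal_mul_diagonal]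
    ext i j
    rcases eq_or_ne i j with rfl | hij
    · rw [Matrix.diagonal_apply_eq, Matrix.one_apply_eq]
      exact mul_inv_cancel₀ (Complex.ofReal_ne_zero.mpr (hev i))
    · rw [Matrix.diagonal_apply_ne _ hij, Matrix.one_apply_ne hij]
  conv_lhs => rw [hA.spectral_theorem, Unitary.conjStarAlgAut_apply]
  exact aux_unit_inv _ _ _ h1 h2 hDD

private lemma aux_trace_inv {N : ℕ} {A : Matrix (Fin N) (Fin N) ℂ} (hA : A.IsHermitian)
    (hev : ∀ i, hA.eigenvalues i ≠ 0) :
    A⁻¹.trace = ∑ i, ((hA.eigenvalues i : ℂ))⁻¹ := by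
  rw [aux_inv_eq hA hev, Matrix.trace_mul_cycle,
    Matrix.mem_unitaryGroup_iff'.mp hA.eigenvectorUnitary.2, Matrix.one_mul,
    Matrix.trace_diagonal]

/-- For positive definite Hermitian `n×n` matrices `g, g₀`:
`tr(g₀⁻¹ g) ≤ (1/(n−1)!) · (tr(g⁻¹ g₀))^{n−1} · (det g / det g₀)`. -/
theorem stmt_3 (n : ℕ) (hn : 1 ≤ n) (g g₀ : Matrix (Fin n) (Fin n) ℂ)
    (hg : g.PosDef) (hg₀ : g₀.PosDef) :
    (Matrix.trace (g₀⁻¹ * g)).re ≤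
      (1 / (Nat.factorial (n - 1) : ℝ)) * ((Matrix.trace (g⁻¹ * g₀)).re) ^ (n - 1) *
        (g.det.re / g₀.det.re) := by
  obtain ⟨m, rfl⟩ : ∃ m, n = m + 1 := ⟨n - 1, (Nat.succ_pred_eq_of_pos hn).symm⟩
  simp only [Nat.add_sub_cancel]
  set B : Matrix (Fin (m + 1)) (Fin (m + 1)) ℂ := (open scoped MatrixOrder in CFC.sqrt g₀) with hBdef
  have hB : B.PosSemidef := (open scoped MatrixOrder in Matrix.nonneg_iff_posSemidef.mp (CFC.sqrt_nonneg g₀))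
  have hBB : B * B = g₀ := (open scoped MatrixOrder in CFC.sqrt_mul_sqrt_self g₀ hg₀.posSemidef.nonneg)
  have hdetg₀ : IsUnit g₀.det := hg₀.isUnit.map Matrix.detMonoidHom
  have hdetB : IsUnit B.det := by
    have : B.det * B.det = g₀.det := by rw [← Matrix.det_mul, hBB]
    exact isUnit_of_mul_isUnit_left (this ▸ hdetg₀)
  have hBinvH : (B⁻¹).IsHermitian := hB.inv.isHermitian
  set A : Matrix (Fin (m + 1)) (Fin (m + 1)) ℂ := B⁻¹ * g * B⁻¹ with hAdef
  have hA_psd : A.PosSemidef := by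
    have := hg.posSemidef.conjTranspose_mul_mul_same B⁻¹
    rwa [hBinvH.eq] at this
  have hAH : A.IsHermitian := hA_psd.isHermitian
  set lam : Fin (m + 1) → ℝ := hAH.eigenvalues with hlamdef
  -- determinant of A
  have hdetA : A.det = g.det / g₀.det := by
    rw [hAdef, Matrix.det_mul, Matrix.det_mul, Matrix.det_nonsing_inv,
      Ring.inverse_eq_inv', ← hBB, Matrix.det_mul]
    field_simp
  have hdetA2 : A.det = ((∏ i, lam i : ℝ) : ℂ) := by
    rw [hAH.det_eq_prod_eigenvalues]
    push_cast
    rfl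
  have hgdet : 0 < g.det.re ∧ g.det.im = 0 := by
    have := hg.det_pos
    rw [Complex.lt_def] at this
    exact ⟨by simpa using this.1, by simpa using this.2.symm⟩
  have hg₀det : 0 < g₀.det.re ∧ g₀.det.im = 0 := by
    have := hg₀.det_pos
    rw [Complex.lt_def] at this
    exact ⟨by simpa using this.1, by simpa using this.2.symm⟩
  have hgdet_eq : g.det = ((g.det.re : ℝ) : ℂ) := by
    rw [Complex.ext_iff]; simp [hgdet.2]
  have hg₀det_eq : g₀.det = ((g₀.det.re : ℝ) : ℂ) := by
    rw [Complex.ext_iff]; simp [hg₀det.2]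
  have hprod : ∏ i, lam i = g.det.re / g₀.det.re := by
    have : ((∏ i, lam i : ℝ) : ℂ) = ((g.det.re / g₀.det.re : ℝ) : ℂ) := by
      rw [← hdetA2, hdetA, hgdet_eq, hg₀det_eq]
      simp [div_eq_mul_inv]
    exact_mod_cast this
  have hlampos : ∀ i, 0 < lam i := by
    intro i
    rcases (hA_psd.eigenvalues_nonneg i).lt_or_eq with h | h
    · exact h
    · exfalso
      have hprodpos : 0 < ∏ i, lam i := by
        rw [hprod]; exact div_pos hgdet.1 hg₀det.1
      have : ∏ i, lam i = 0 :=
        Finset.prod_eq_zero (Finset.mem_univ i) h.symm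
      rw [this] at hprodpos
      exact lt_irrefl 0 hprodpos
  have hlamne : ∀ i, lam i ≠ 0 := fun i => (hlampos i).ne'
  -- trace identities
  have htr1 : (Matrix.trace (g₀⁻¹ * g)).re = ∑ i, lam i := by
    have : g₀⁻¹ * g = B⁻¹ * B⁻¹ * g := by rw [← hBB, Matrix.mul_inv_rev]
    rw [this, ← Matrix.trace_mul_cycle B⁻¹ g B⁻¹, ← hAdef, aux_trace hAH]
    simp
    rfl
  have htr2 : (Matrix.trace (g⁻¹ * g₀)).re = ∑ i, (lam i)⁻¹ := by
    have hAinv : A⁻¹ = B * g⁻¹ * B := by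
      rw [hAdef, Matrix.mul_inv_rev, Matrix.mul_inv_rev,
        Matrix.nonsing_inv_nonsing_inv B hdetB, Matrix.mul_assoc]
    have h2 : g⁻¹ * g₀ = g⁻¹ * B * B := by rw [Matrix.mul_assoc, hBB]
    rw [h2, Matrix.trace_mul_cycle g⁻¹ B B, ← hAinv, aux_trace_inv hAH hlamne]
    simp
    rfl
  rw [htr1, htr2, ← hprod]
  exact aux_scalar m lam hlampos
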